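/- Let n be an even positive integer and let p ∈ [0,1]^n be the frequency vector of a univariate probabilistic model, i.e., a random bit string x ∈ {0,1}^n is sampled by independently setting x_i = 1 with probability p_i for each i. Let E be the event that x is an optimum of EqualBlocksOneMax, and let z ∈ {0,1}^n be the rounded frequency vector defined by z_i = 1 if p_i ≥ 1/2 and z_i = 0 otherwise. Assume there exists k > 0 such that Pr[E] ≥ n^{-k}. Then for every γ ≥ 4k, the Hamming distance H(x,z) between x and z satisfies Pr[H(x,z) ≥ γ · ln(n)] ≤ n^{-γ/6}. -/

import Mathlib

/-!
STATEMENT 0: If a univariate model `p` on bit strings of even length `n = 2 * m`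
samples an optimum of EqualBlocksOneMax with probability at least `n ^ (-k)`,
then for every `γ ≥ 4k`, the probability that a sample has Hamming distance at
least `γ * ln n` from the rounded frequency vector `z` is at most `n ^ (-γ/6)`.
-/

/-- The probability that the univariate model with frequency vector `p` samples
exactly the bit string `x` (bits are independent, bit `i` is `true` with
probability `p i`). -/
noncomputable def univMass {n : ℕ} (p : Fin n → ℝ) (x : Fin n → Bool) : ℝ :=
  ∏ i, if x i then p i else 1 - p i

open scoped Classical in
/-- The probability that a sample from the univariate model with frequency
vector `p` satisfies the predicate `A`. -/
noncomputable def univPr {n : ℕ} (p : Fin n → ℝ) (A : (Fin n → Bool) → Prop) : ℝ :=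
  ∑ x : Fin n → Bool, if A x then univMass p x else 0

/-- `x` is an optimum of EqualBlocksOneMax on bit strings of length `2 * m`:
every block (pair of positions `2j` and `2j+1`, zero-based) has two equal bits. -/
def IsEBOMOptimum (m : ℕ) (x : Fin (2 * m) → Bool) : Prop :=
  ∀ j : Fin m,
    x ⟨2 * j.1, by have := j.2; omega⟩ = x ⟨2 * j.1 + 1, by have := j.2; omega⟩

open Finset

private lemma prod_range_two_mul' {M : Type*} [CommMonoid M] (f : ℕ → M) :
    ∀ m : ℕ, ∏ i ∈ Finset.range (2*m), f i = ∏ j ∈ Finset.range m, (f (2*j) * f (2*j+1))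
  | 0 => by simp
  | (m+1) => by
      have h : 2*(m+1) = (2*m)+1+1 := by ring
      rw [h, Finset.prod_range_succ, Finset.prod_range_succ, prod_range_two_mul' f m,
        Finset.prod_range_succ, mul_assoc]

private lemma prod_fin_pair {M : Type*} [CommMonoid M] {m : ℕ} (f : Fin (2*m) → M) :
    ∏ i, f i = ∏ j : Fin m,
      (f ⟨2*j.1, by have := j.2; omega⟩ * f ⟨2*j.1+1, by have := j.2; omega⟩) := by
  classical
  set F : ℕ → M := fun i => if h : i < 2*m then f ⟨i, h⟩ else 1 with hF
  have h1 : ∏ i, f i = ∏ i ∈ Finset.range (2*m), F i := by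
    rw [← Fin.prod_univ_eq_prod_range]
    exact Finset.prod_congr rfl fun i _ => by simp [hF, i.2]
  have h3 : ∏ j : Fin m, (f ⟨2*j.1, by have := j.2; omega⟩ * f ⟨2*j.1+1, by have := j.2; omega⟩)
      = ∏ j ∈ Finset.range m, (F (2*j) * F (2*j+1)) := by
    rw [← Fin.prod_univ_eq_prod_range (fun j => F (2*j) * F (2*j+1)) m]
    refine Finset.prod_congr rfl fun j _ => ?_
    have e1 : F (2*j.1) = f ⟨2*j.1, by have := j.2; omega⟩ := dif_pos (by have := j.2; omega)
    have e2 : F (2*j.1+1) = f ⟨2*j.1+1, by have := j.2; omega⟩ := dif_pos (by have := j.2; omega)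
    rw [e1, e2]
  rw [h1, prod_range_two_mul' F m, h3]

private lemma sum_pi_prod {ι β : Type*} [Fintype ι] [DecidableEq ι] [Fintype β]
    (g : ι → β → ℝ) : ∑ x : ι → β, ∏ i, g i (x i) = ∏ i, ∑ b, g i b := by
  rw [Finset.prod_univ_sum (fun _ : ι => (Finset.univ : Finset β)) g, Fintype.piFinset_univ]

private def pairEquiv (m : ℕ) : (Fin (2*m) → Bool) ≃ (Fin m → Bool × Bool) where
  toFun x j := (x ⟨2*j.1, by have := j.2; omega⟩, x ⟨2*j.1+1, by have := j.2; omega⟩)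
  invFun y i := if h : i.1 % 2 = 0 then (y ⟨i.1/2, by have := i.2; omega⟩).1
                else (y ⟨i.1/2, by have := i.2; omega⟩).2
  left_inv x := by
    funext i
    by_cases h : i.1 % 2 = 0
    · simp only [dif_pos h]
      congr 1
      exact Fin.ext (by simp; omega)
    · simp only [dif_neg h]
      congr 1
      exact Fin.ext (by simp; omega)
  right_inv y := by
    funext j
    have h1 : (2*j.1) % 2 = 0 := by omega
    have h2 : ¬ ((2*j.1+1) % 2 = 0) := by omega
    simp only [dif_pos h1, dif_neg h2]
    have e1 : (2*j.1)/2 = j.1 := by omega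
    have e2 : (2*j.1+1)/2 = j.1 := by omega
    simp only [e1, e2]

private lemma univPr_EBOM (m : ℕ) (p : Fin (2*m) → ℝ) :
    univPr p (IsEBOMOptimum m) =
      ∏ j : Fin m,
        (p ⟨2*j.1, by have := j.2; omega⟩ * p ⟨2*j.1+1, by have := j.2; omega⟩ +
         (1 - p ⟨2*j.1, by have := j.2; omega⟩) * (1 - p ⟨2*j.1+1, by have := j.2; omega⟩)) := by
  classical
  set g : (j : Fin m) → Bool × Bool → ℝ := fun j ab =>
    (if ab.1 then p ⟨2*j.1, by have := j.2; omega⟩ else 1 - p ⟨2*j.1, by have := j.2; omega⟩) *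
    (if ab.2 then p ⟨2*j.1+1, by have := j.2; omega⟩ else 1 - p ⟨2*j.1+1, by have := j.2; omega⟩) *
    (if ab.1 = ab.2 then 1 else 0) with hg
  have key : ∀ x : Fin (2*m) → Bool,
      (if IsEBOMOptimum m x then univMass p x else 0) = ∏ j : Fin m, g j (pairEquiv m x j) := by
    intro x
    have hgx : ∀ j : Fin m, g j (pairEquiv m x j) =
        ((if x ⟨2*j.1, by have := j.2; omega⟩ then p ⟨2*j.1, by have := j.2; omega⟩
            else 1 - p ⟨2*j.1, by have := j.2; omega⟩) *
         (if x ⟨2*j.1+1, by have := j.2; omega⟩ then p ⟨2*j.1+1, by have := j.2; omega⟩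
            else 1 - p ⟨2*j.1+1, by have := j.2; omega⟩)) *
        (if x ⟨2*j.1, by have := j.2; omega⟩ = x ⟨2*j.1+1, by have := j.2; omega⟩ then 1 else 0) := by
      intro j; rw [hg]; rfl
    rw [Finset.prod_congr rfl (fun j _ => hgx j), Finset.prod_mul_distrib, Finset.prod_boole]
    have hmass : univMass p x = ∏ j : Fin m,
        ((if x ⟨2*j.1, by have := j.2; omega⟩ then p ⟨2*j.1, by have := j.2; omega⟩
            else 1 - p ⟨2*j.1, by have := j.2; omega⟩) *
         (if x ⟨2*j.1+1, by have := j.2; omega⟩ then p ⟨2*j.1+1, by have := j.2; omega⟩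
            else 1 - p ⟨2*j.1+1, by have := j.2; omega⟩)) := by
      rw [univMass, prod_fin_pair]
    by_cases hopt : IsEBOMOptimum m x
    · rw [if_pos hopt, if_pos (fun j _ => hopt j), hmass, mul_one]
    · rw [if_neg hopt, if_neg (fun h => hopt (fun j => h j (Finset.mem_univ j))), mul_zero]
  rw [univPr, Finset.sum_congr rfl (fun x _ => key x),
    Equiv.sum_comp (pairEquiv m) (fun y => ∏ j : Fin m, g j (y j)),
    sum_pi_prod g]
  refine Finset.prod_congr rfl fun j _ => ?_
  rw [Fintype.sum_prod_type]
  simp only [hg, Fintype.sum_bool]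
  norm_num

private lemma two_pow_hamming {m : ℕ} (x z : Fin (2*m) → Bool) :
    (2:ℝ) ^ (hammingDist x z) = ∏ i, (if x i = z i then 1 else (2:ℝ)) := by
  classical
  rw [Finset.prod_ite (fun _ => (1:ℝ)) (fun _ => (2:ℝ)), Finset.prod_const, Finset.prod_const,
    one_pow, one_mul]
  rfl

private lemma sum_mass_two_pow (m : ℕ) (p : Fin (2*m) → ℝ) (z : Fin (2*m) → Bool) :
    ∑ x : Fin (2*m) → Bool, univMass p x * 2 ^ (hammingDist x z)
      = ∏ i, (1 + (if z i then 1 - p i else p i)) := by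
  classical
  have key : ∀ x : Fin (2*m) → Bool, univMass p x * 2 ^ (hammingDist x z)
      = ∏ i, ((if x i then p i else 1 - p i) * (if x i = z i then 1 else 2)) := by
    intro x
    rw [univMass, two_pow_hamming x z, Finset.prod_mul_distrib]
  rw [Finset.sum_congr rfl (fun x _ => key x),
    sum_pi_prod (fun i b => (if b then p i else 1 - p i) * (if b = z i then 1 else 2))]
  refine Finset.prod_congr rfl fun i _ => ?_
  rw [Fintype.sum_bool]
  cases hzi : z i <;> norm_num <;> ring

private lemma block_bound (a b qa qb : ℝ) (ha : 0 ≤ qa) (ha2 : qa ≤ 1/2) (hb : 0 ≤ qb)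
    (hb2 : qb ≤ 1/2) (hA : a = qa ∨ a = 1 - qa) (hB : b = qb ∨ b = 1 - qb) :
    a*b + (1-a)*(1-b) ≤ (1 - qa/2) * (1 - qb/2) := by
  rcases hA with h|h <;> rcases hB with h'|h' <;> rw [h, h'] <;>
    nlinarith [mul_nonneg ha hb,
      mul_nonneg (by linarith : (0:ℝ) ≤ 1-2*qa) hb,
      mul_nonneg (by linarith : (0:ℝ) ≤ 1-2*qb) ha,
      mul_nonneg (by linarith : (0:ℝ) ≤ 1-2*qa) (by linarith : (0:ℝ) ≤ 1-2*qb)]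

theorem univariate_model_concentration
    (m : ℕ) (hm : 0 < m)
    (p : Fin (2 * m) → ℝ) (hp : ∀ i, p i ∈ Set.Icc (0 : ℝ) 1)
    (z : Fin (2 * m) → Bool) (hz : ∀ i, z i = true ↔ (1 : ℝ) / 2 ≤ p i)
    (k : ℝ) (hk : 0 < k)
    (hE : ((2 * m : ℕ) : ℝ) ^ (-k) ≤ univPr p (IsEBOMOptimum m))
    (γ : ℝ) (hγ : 4 * k ≤ γ) :
    univPr p (fun x => γ * Real.log ((2 * m : ℕ) : ℝ) ≤ (hammingDist x z : ℝ))
      ≤ ((2 * m : ℕ) : ℝ) ^ (-(γ / 6)) := by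
  classical
  have hNgt1 : (1:ℝ) < ((2 * m : ℕ) : ℝ) := by
    have : (2:ℕ) ≤ 2 * m := by omega
    exact_mod_cast Nat.lt_of_lt_of_le one_lt_two this
  have hNpos : (0:ℝ) < ((2 * m : ℕ) : ℝ) := by linarith
  set L : ℝ := Real.log ((2 * m : ℕ) : ℝ) with hLdef
  have hLpos : 0 < L := Real.log_pos hNgt1
  set q : Fin (2*m) → ℝ := fun i => if z i then 1 - p i else p i with hq
  have hq0 : ∀ i, 0 ≤ q i := by
    intro i
    by_cases h : z i = true <;> simp only [hq, h, if_true, if_false, Bool.false_eq_true]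
    · linarith [(hp i).2]
    · exact (hp i).1
  have hq2 : ∀ i, q i ≤ 1/2 := by
    intro i
    by_cases h : z i = true <;> simp only [hq, h, if_true, if_false, Bool.false_eq_true]
    · linarith [(hz i).mp h]
    · have : ¬ ((1:ℝ)/2 ≤ p i) := fun hc => h ((hz i).mpr hc)
      linarith
  have hpq : ∀ i, p i = q i ∨ p i = 1 - q i := by
    intro i
    by_cases h : z i = true <;> simp only [hq, h, if_true, if_false, Bool.false_eq_true]
    · right; ring
    · left; trivial
  set S : ℝ := ∑ i, q i with hS
  -- Step 1 : Pr[E] ≤ exp (-(S/2))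
  have h1 : univPr p (IsEBOMOptimum m) ≤ Real.exp (-(S/2)) := by
    rw [univPr_EBOM]
    have step1 : (∏ j : Fin m,
        (p ⟨2*j.1, by have := j.2; omega⟩ * p ⟨2*j.1+1, by have := j.2; omega⟩ +
         (1 - p ⟨2*j.1, by have := j.2; omega⟩) * (1 - p ⟨2*j.1+1, by have := j.2; omega⟩)))
        ≤ ∏ j : Fin m, ((1 - q ⟨2*j.1, by have := j.2; omega⟩ / 2) *
            (1 - q ⟨2*j.1+1, by have := j.2; omega⟩ / 2)) := by
      apply Finset.prod_le_prod
      · intro j _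
        have h1 := hp ⟨2*j.1, by have := j.2; omega⟩
        have h2 := hp ⟨2*j.1+1, by have := j.2; omega⟩
        nlinarith [h1.1, h1.2, h2.1, h2.2]
      · intro j _
        exact block_bound _ _ _ _ (hq0 _) (hq2 _) (hq0 _) (hq2 _) (hpq _) (hpq _)
    have step2 : (∏ j : Fin m, ((1 - q ⟨2*j.1, by have := j.2; omega⟩ / 2) *
            (1 - q ⟨2*j.1+1, by have := j.2; omega⟩ / 2)))
        = ∏ i, (1 - q i / 2) := (prod_fin_pair fun i => 1 - q i / 2).symm
    have step3 : (∏ i, (1 - q i / 2)) ≤ ∏ i, Real.exp (-(q i / 2)) := by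
      apply Finset.prod_le_prod
      · intro i _; have := hq2 i; linarith
      · intro i _
        have := Real.add_one_le_exp (-(q i / 2))
        linarith
    have step4 : (∏ i, Real.exp (-(q i / 2))) = Real.exp (-(S/2)) := by
      rw [← Real.exp_sum]
      congr 1
      rw [hS, Finset.sum_div, ← Finset.sum_neg_distrib]
    calc _ ≤ _ := step1
      _ = _ := step2
      _ ≤ _ := step3
      _ = _ := step4
  -- Step 2 : S ≤ 2 k L
  have h2 : S ≤ 2 * k * L := by
    have hle := le_trans hE h1
    rw [Real.rpow_def_of_pos hNpos] at hle
    have := Real.exp_le_exp.mp hle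
    nlinarith
  -- Step 3 : Chernoff
  set t : ℝ := γ * L with ht
  have hmass0 : ∀ x : Fin (2*m) → Bool, 0 ≤ univMass p x := by
    intro x
    apply Finset.prod_nonneg
    intro i _
    by_cases h : x i = true <;> simp only [h, if_true, if_false, Bool.false_eq_true]
    · exact (hp i).1
    · linarith [(hp i).2]
  have h3 : univPr p (fun x => t ≤ (hammingDist x z : ℝ))
      ≤ (2:ℝ)^(-t) * ∑ x : Fin (2*m) → Bool, univMass p x * 2 ^ (hammingDist x z) := by
    rw [univPr, Finset.mul_sum]
    apply Finset.sum_le_sum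
    intro x _
    by_cases hA : t ≤ (hammingDist x z : ℝ)
    · rw [if_pos hA]
      have hone : (1:ℝ) ≤ (2:ℝ)^(-t) * 2 ^ (hammingDist x z) := by
        rw [← Real.rpow_natCast 2 (hammingDist x z), ← Real.rpow_add two_pos]
        calc (1:ℝ) = (2:ℝ)^(0:ℝ) := (Real.rpow_zero 2).symm
          _ ≤ _ := Real.rpow_le_rpow_of_exponent_le one_le_two (by linarith)
      nlinarith [hmass0 x, mul_le_mul_of_nonneg_left hone (hmass0 x)]
    · rw [if_neg hA]
      have h2pow : (0:ℝ) ≤ (2:ℝ) ^ (hammingDist x z) := by positivity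
      exact mul_nonneg (Real.rpow_nonneg (by norm_num) _) (mul_nonneg (hmass0 x) h2pow)
  have h4 : (∑ x : Fin (2*m) → Bool, univMass p x * 2 ^ (hammingDist x z))
      ≤ Real.exp ((γ/2) * L) := by
    rw [sum_mass_two_pow]
    have : (∏ i, (1 + q i)) ≤ ∏ i, Real.exp (q i) := by
      apply Finset.prod_le_prod
      · intro i _; linarith [hq0 i]
      · intro i _; linarith [Real.add_one_le_exp (q i)]
    calc (∏ i, (1 + q i)) ≤ ∏ i, Real.exp (q i) := this
      _ = Real.exp S := by rw [← Real.exp_sum]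
      _ ≤ Real.exp ((γ/2) * L) := by
          apply Real.exp_le_exp.mpr
          nlinarith
  have hfinal : (2:ℝ)^(-t) * Real.exp ((γ/2) * L) ≤ ((2 * m : ℕ) : ℝ) ^ (-(γ / 6)) := by
    rw [Real.rpow_def_of_pos two_pos, Real.rpow_def_of_pos hNpos, ← Real.exp_add]
    apply Real.exp_le_exp.mpr
    have hlog2 : (2:ℝ)/3 ≤ Real.log 2 := by nlinarith [Real.log_two_gt_d9]
    have hγ0 : 0 < γ := by linarith
    nlinarith [mul_pos hγ0 hLpos,
      mul_le_mul_of_nonneg_right hlog2 (le_of_lt (mul_pos hγ0 hLpos))]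
  have h2nonneg : (0:ℝ) ≤ (2:ℝ)^(-t) := Real.rpow_nonneg (by norm_num) _
  calc univPr p (fun x => γ * Real.log ((2 * m : ℕ) : ℝ) ≤ (hammingDist x z : ℝ))
      ≤ (2:ℝ)^(-t) * ∑ x : Fin (2*m) → Bool, univMass p x * 2 ^ (hammingDist x z) := h3
    _ ≤ (2:ℝ)^(-t) * Real.exp ((γ/2) * L) := by
        exact mul_le_mul_of_nonneg_left h4 h2nonneg
    _ ≤ ((2 * m : ℕ) : ℝ) ^ (-(γ / 6)) := hfinal
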